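/- arXiv:1005.0616 — 2 statements merged into one kernel-verified Lean document; each statement's English description precedes it below -/
import Mathlib

section
/- Let Z_1, Z_2, … be i.i.d. Gaussian random variables with mean s ≥ 0 and variance σ² > 0. Define S_t = Z_1 + … + Z_t, μ_l = inf{t ≥ 1 : S_t ≥ l} for l ≥ 0, and R_{μ_l} = S_{μ_l} − l. Then sup_{l ≥ 0} E(R_{μ_l}) ≤ 2s + 4σ. -/
open MeasureTheory ProbabilityTheory Real Filter
open scoped ENNReal NNReal

section OvershootAux
open Set
open scoped Topology

section GaussAnalysis

variable (s V : ℝ)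

/-- the (unnormalized-constant) gaussian density -/
noncomputable def gf (c : ℝ) (x : ℝ) : ℝ := c * Real.exp (-(x - s)^2 / (2*V))

lemma gf_hasDerivAt (c : ℝ) (hV : 0 < V) (x : ℝ) :
    HasDerivAt (gf s V c) (gf s V c x * (-(x - s)/V)) x := by
  have h1 : HasDerivAt (fun x : ℝ => -(x - s)^2 / (2*V)) (-(x - s)/V) x := by
    have : HasDerivAt (fun x : ℝ => x - s) 1 x := (hasDerivAt_id x).sub_const s
    have h2 := (this.pow 2)
    have h3 := h2.neg.div_const (2*V)
    refine h3.congr_deriv ?_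
    field_simp
    ring
  have h4 := h1.exp.const_mul c
  have heq : gf s V c x * (-(x - s)/V) = c * (Real.exp (-(x - s)^2 / (2*V)) * (-(x-s)/V)) := by
    simp only [gf]; ring
  rw [heq]
  exact h4

lemma gf_tendsto_zero (c : ℝ) (hV : 0 < V) :
    Tendsto (gf s V c) atTop (𝓝 0) := by
  have h1 : Tendsto (fun x : ℝ => -(x - s)^2 / (2*V)) atTop atBot := by
    apply Tendsto.atBot_div_const (by positivity)
    apply tendsto_neg_atBot_iff.mpr
    exact (tendsto_pow_atTop (two_ne_zero)).comp (tendsto_atTop_add_const_right _ (-s) tendsto_id) |>.congr (by intro x; simp [sub_eq_add_neg])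
  have := (Real.tendsto_exp_atBot.comp h1).const_mul c
  unfold gf
  simpa [mul_zero] using this

lemma gf_integrable (c : ℝ) (hV : 0 < V) : Integrable (gf s V c) := by
  have hb : (0:ℝ) < (2*V)⁻¹ := by positivity
  have h := (integrable_exp_neg_mul_sq hb).comp_sub_right s
  apply (h.const_mul c).congr
  refine ae_of_all _ fun x => ?_
  simp only [gf]
  congr 1
  field_simp

lemma gf_mul_integrable (c : ℝ) (hV : 0 < V) :
    Integrable (fun x => (x - s) * gf s V c x) := by
  have hb : (0:ℝ) < (2*V)⁻¹ := by positivity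
  have h := (integrable_mul_exp_neg_mul_sq hb).comp_sub_right s
  apply (h.const_mul c).congr
  refine ae_of_all _ fun x => ?_
  simp only [gf]
  rw [show -(2 * V)⁻¹ * (x - s) ^ 2 = -(x - s)^2/(2*V) by field_simp]
  ring

end GaussAnalysis

section GaussAnalysis2

variable {s V : ℝ}

lemma gf_integral_Ioi (c : ℝ) (hV : 0 < V) (u : ℝ) :
    ∫ x in Ioi u, (x - s) * gf s V c x = V * gf s V c u := by
  have hderiv : ∀ x ∈ Ici u, HasDerivAt (fun x => -V * gf s V c x)
      ((x - s) * gf s V c x) x := by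
    intro x _
    have h := (gf_hasDerivAt s V c hV x).const_mul (-V)
    have heq : -V * (gf s V c x * (-(x - s)/V)) = (x - s) * gf s V c x := by
      field_simp
    rwa [heq] at h
  have htend : Tendsto (fun x => -V * gf s V c x) atTop (𝓝 0) := by
    have := (gf_tendsto_zero s V c hV).const_mul (-V)
    simpa using this
  have h := integral_Ioi_of_hasDerivAt_of_tendsto' hderiv
    (gf_mul_integrable s V c hV).integrableOn htend
  rw [h]; ring

lemma gf_cont (c : ℝ) (hV : 0 < V) : Continuous (gf s V c) := by
  unfold gf; fun_prop

lemma gf_nonneg (c : ℝ) (hc : 0 ≤ c) (x : ℝ) : 0 ≤ gf s V c x := by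
  unfold gf; positivity

lemma gf_tail_lb (c : ℝ) (hV : 0 < V) (hc : 0 ≤ c) (u : ℝ) :
    V * (u - s) / ((u - s)^2 + V) * gf s V c u ≤ ∫ x in Ioi u, gf s V c x := by
  set r : ℝ → ℝ := fun x => V * (x - s) / ((x - s)^2 + V) with hr
  have hd0 : ∀ x : ℝ, ((x - s)^2 + V) ≠ 0 := fun x => by positivity
  have hrderiv : ∀ x : ℝ, HasDerivAt r (V * (V - (x - s)^2) / (((x - s)^2 + V))^2) x := by
    intro x
    have hn : HasDerivAt (fun x : ℝ => V * (x - s)) V x := by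
      simpa using ((hasDerivAt_id x).sub_const s).const_mul V
    have hdd : HasDerivAt (fun x : ℝ => (x - s)^2 + V) (2 * (x - s)) x := by
      have := (((hasDerivAt_id x).sub_const s).pow 2).add_const V
      simpa [mul_comm] using this
    have h := hn.div hdd (hd0 x)
    refine h.congr_deriv ?_
    field_simp
    ring
  have hGderiv : ∀ x ∈ Ici u, HasDerivAt (fun x => -r x * gf s V c x)
      ((1 - 2*V^2 / (((x - s)^2 + V))^2) * gf s V c x) x := by
    intro x _
    have h := ((hrderiv x).neg).mul (gf_hasDerivAt s V c hV x)
    refine h.congr_deriv ?_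
    simp only [hr, gf, Pi.neg_apply]
    field_simp
    ring
  have hGint : IntegrableOn (fun x => (1 - 2*V^2 / (((x - s)^2 + V))^2) * gf s V c x)
      (Ioi u) := by
    apply Integrable.mono ((gf_integrable s V c hV).integrableOn)
    · apply Continuous.aestronglyMeasurable
      apply Continuous.mul _ (gf_cont c hV)
      exact continuous_const.sub (continuous_const.div (by fun_prop) (fun x => by positivity))
    · refine ae_of_all _ fun x => ?_
      rw [Real.norm_eq_abs, Real.norm_eq_abs, abs_mul, abs_of_nonneg (gf_nonneg c hc x)]
      have h1 : (0:ℝ) ≤ 2*V^2 / (((x - s)^2 + V))^2 := by positivity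
      have h2 : 2*V^2 / (((x - s)^2 + V))^2 ≤ 2 := by
        rw [div_le_iff₀ (by positivity)]
        nlinarith [sq_nonneg (x - s), sq_nonneg ((x-s)^2)]
      have : |1 - 2*V^2 / (((x - s)^2 + V))^2| ≤ 1 := by
        rw [abs_le]; constructor <;> linarith
      calc |1 - 2*V^2 / (((x - s)^2 + V))^2| * gf s V c x
          ≤ 1 * gf s V c x := by
            apply mul_le_mul_of_nonneg_right this (gf_nonneg c hc x)
        _ = gf s V c x := one_mul _
  have hGtend : Tendsto (fun x => -r x * gf s V c x) atTop (𝓝 0) := by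
    apply squeeze_zero_norm (a := fun x => (Real.sqrt V / 2 * c) * Real.exp (-(x - s)^2 / (2*V)))
    · intro x
      rw [norm_mul, norm_neg, Real.norm_eq_abs, Real.norm_eq_abs,
        abs_of_nonneg (gf_nonneg c hc x)]
      simp only [gf]
      have hrb : |r x| ≤ Real.sqrt V / 2 := by
        simp only [hr]
        rw [abs_div, abs_of_nonneg (by positivity : (0:ℝ) ≤ (x - s)^2 + V)]
        rw [div_le_iff₀ (by positivity)]
        have h2 : 2 * |x - s| * Real.sqrt V ≤ (x - s)^2 + V := by
          have := two_mul_le_add_sq |x - s| (Real.sqrt V)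
          rw [sq_abs, Real.sq_sqrt hV.le] at this
          linarith
        have : |V * (x - s)| = V * |x - s| := by
          rw [abs_mul, abs_of_nonneg hV.le]
        rw [this]
        nlinarith [abs_nonneg (x - s), Real.sqrt_nonneg V, Real.sqrt_pos.mpr hV,
          Real.sq_sqrt hV.le, sq_nonneg (|x - s| - Real.sqrt V)]
      calc |r x| * (c * Real.exp (-(x - s)^2 / (2*V)))
          ≤ (Real.sqrt V / 2) * (c * Real.exp (-(x - s)^2 / (2*V))) := by
            apply mul_le_mul_of_nonneg_right hrb (by positivity)
        _ = (Real.sqrt V / 2 * c) * Real.exp (-(x - s)^2 / (2*V)) := by ring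
    · have := (gf_tendsto_zero s V 1 hV).const_mul (Real.sqrt V / 2 * c)
      simp only [gf, one_mul, mul_zero] at this ⊢
      exact this
  have key := integral_Ioi_of_hasDerivAt_of_tendsto' hGderiv hGint hGtend
  have hGu : (0:ℝ) - (-r u * gf s V c u) = r u * gf s V c u := by ring
  rw [hGu] at key
  have hmono : ∫ x in Ioi u, (1 - 2*V^2 / (((x - s)^2 + V))^2) * gf s V c x
      ≤ ∫ x in Ioi u, gf s V c x := by
    apply integral_mono hGint (gf_integrable s V c hV).integrableOn
    intro x
    have h1 : (0:ℝ) ≤ 2*V^2 / (((x - s)^2 + V))^2 := by positivity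
    nlinarith [gf_nonneg (s := s) (V := V) c hc x]
  calc V * (u - s) / ((u - s)^2 + V) * gf s V c u = r u * gf s V c u := rfl
    _ = _ := key.symm
    _ ≤ _ := hmono

end GaussAnalysis2

section GaussCore

lemma Qb_nonneg {s V : ℝ} (c : ℝ) (hc : 0 ≤ c) (u : ℝ) :
    0 ≤ ∫ x in Ioi u, gf s V c x :=
  setIntegral_nonneg measurableSet_Ioi (fun x _ => gf_nonneg c hc x)

lemma Qb_antitone {s V : ℝ} (c : ℝ) (hV : 0 < V) (hc : 0 ≤ c) {u w : ℝ} (huw : u ≤ w) :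
    ∫ x in Ioi w, gf s V c x ≤ ∫ x in Ioi u, gf s V c x := by
  apply setIntegral_mono_set (gf_integrable s V c hV).integrableOn
    (ae_of_all _ (fun x => gf_nonneg c hc x))
  exact HasSubset.Subset.eventuallyLE (Ioi_subset_Ioi huw)

lemma exp_half_lt_two : Real.exp (1/2 : ℝ) < 2 := by
  nlinarith [Real.exp_one_lt_d9, Real.sq_sqrt (le_of_lt (Real.exp_pos (1/2 : ℝ))),
    Real.exp_pos (1/2 : ℝ), sq_nonneg (Real.exp (1/2 : ℝ)),
    Real.exp_add (1/2 : ℝ) (1/2 : ℝ), Real.exp_one_gt_d9]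

lemma gf_core {s σ : ℝ} (c : ℝ) (hs : 0 ≤ s) (hσ : 0 < σ) (hc : 0 ≤ c) {u : ℝ} (hu : 0 ≤ u) :
    σ^2 * gf s (σ^2) c u ≤ (s + 4*σ + u) * ∫ x in Ioi u, gf s (σ^2) c x := by
  have hV : (0:ℝ) < σ^2 := by positivity
  have hQ0 : 0 ≤ ∫ x in Ioi u, gf s (σ^2) c x := Qb_nonneg c hc u
  by_cases hcase : u ≤ s + σ
  · -- small u case
    have hfu : gf s (σ^2) c u ≤ c := by
      simp only [gf]
      have : Real.exp (-(u - s)^2 / (2*σ^2)) ≤ 1 := by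
        apply Real.exp_le_one_iff.mpr
        apply div_nonpos_of_nonpos_of_nonneg (by nlinarith [sq_nonneg (u-s)]) (by positivity)
      nlinarith
    have hQmono : ∫ x in Ioi (s+σ), gf s (σ^2) c x ≤ ∫ x in Ioi u, gf s (σ^2) c x :=
      Qb_antitone c hV hc hcase
    have hlb := gf_tail_lb (s := s) c hV hc (s + σ)
    have hr : σ^2 * ((s+σ) - s) / (((s+σ) - s)^2 + σ^2) = σ / 2 := by
      field_simp
      ring
    have hfsσ : gf s (σ^2) c (s + σ) = c * Real.exp (-(1/2 : ℝ)) := by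
      simp only [gf]
      congr 1
      rw [show ((s+σ) - s) = σ by ring]
      field_simp
    rw [hr, hfsσ] at hlb
    have hexp : (1:ℝ) ≤ 2 * Real.exp (-(1/2 : ℝ)) := by
      have h2 := exp_half_lt_two
      have h3 : Real.exp (-(1/2:ℝ)) = (Real.exp (1/2:ℝ))⁻¹ := by
        rw [← Real.exp_neg]
      rw [h3]
      rw [le_mul_inv_iff₀ (Real.exp_pos _)]
      linarith
    have hcoef : 4*σ ≤ s + 4*σ + u := by linarith
    have hexp0 : 0 ≤ Real.exp (-(1/2:ℝ)) := (Real.exp_pos _).le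
    have hfu2 : σ^2 * gf s (σ^2) c u ≤ σ^2 * c :=
      mul_le_mul_of_nonneg_left hfu (by positivity)
    have s1 : 4*σ * (σ/2 * (c * Real.exp (-(1/2:ℝ)))) ≤ 4*σ * ∫ x in Ioi (s+σ), gf s (σ^2) c x :=
      mul_le_mul_of_nonneg_left hlb (by positivity)
    have s2 : 4*σ * ∫ x in Ioi (s+σ), gf s (σ^2) c x ≤ 4*σ * ∫ x in Ioi u, gf s (σ^2) c x :=
      mul_le_mul_of_nonneg_left hQmono (by positivity)
    have s3 : (4*σ) * ∫ x in Ioi u, gf s (σ^2) c x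
        ≤ (s + 4*σ + u) * ∫ x in Ioi u, gf s (σ^2) c x :=
      mul_le_mul_of_nonneg_right hcoef hQ0
    have s4 : σ^2 * c ≤ 4*σ * (σ/2 * (c * Real.exp (-(1/2:ℝ)))) := by
      have hnn : 0 ≤ σ^2 * c * (2 * Real.exp (-(1/2:ℝ)) - 1) :=
        mul_nonneg (mul_nonneg hV.le hc) (by linarith)
      nlinarith [hnn]
    linarith
  · -- large u case
    push_neg at hcase
    set x := u - s with hx
    have hxσ : σ < x := by simp only [hx]; linarith
    have hx0 : 0 < x := lt_trans hσ hxσ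
    have hlb := gf_tail_lb (s := s) c hV hc u
    rw [← hx] at hlb
    have hd : (0:ℝ) < x^2 + σ^2 := by positivity
    have hgf0 := gf_nonneg (s := s) (V := σ^2) c hc u
    -- multiply hlb by (x^2+σ^2)/x
    have h1 : σ^2 * gf s (σ^2) c u ≤ ((x^2 + σ^2)/x) * ∫ z in Ioi u, gf s (σ^2) c z := by
      have hmul := mul_le_mul_of_nonneg_left hlb (le_of_lt (div_pos hd hx0))
      calc σ^2 * gf s (σ^2) c u
          = ((x^2 + σ^2)/x) * (σ^2 * x / (x^2 + σ^2) * gf s (σ^2) c u) := by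
            field_simp
        _ ≤ _ := hmul
    have h2 : (x^2 + σ^2)/x ≤ s + 4*σ + u := by
      rw [div_le_iff₀ hx0]
      nlinarith
    calc σ^2 * gf s (σ^2) c u ≤ ((x^2 + σ^2)/x) * ∫ z in Ioi u, gf s (σ^2) c z := h1
      _ ≤ (s + 4*σ + u) * ∫ z in Ioi u, gf s (σ^2) c z :=
          mul_le_mul_of_nonneg_right h2 hQ0

end GaussCore

section GaussKey

lemma gauss_overshoot_step (s σ : ℝ) (hs : 0 ≤ s) (hσ : 0 < σ) {u : ℝ} (hu : 0 ≤ u) :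
    ∫⁻ z, ENNReal.ofReal (z - u) ∂(gaussianReal s ((σ^2).toNNReal))
      ≤ ENNReal.ofReal (2*s + 4*σ) * (gaussianReal s ((σ^2).toNNReal)) {z | u ≤ z} := by
  set c : ℝ := (Real.sqrt (2*π*σ^2))⁻¹ with hcdef
  have hc : 0 ≤ c := by positivity
  have hV2 : (0:ℝ) < σ^2 := by positivity
  have hV : ((σ^2).toNNReal) ≠ 0 := by
    simp only [ne_eq, Real.toNNReal_eq_zero, not_le]
    exact hV2
  have hcoe : (((σ^2).toNNReal : ℝ≥0) : ℝ) = σ^2 := Real.coe_toNNReal _ hV2.le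
  have hpdf : gaussianPDFReal s ((σ^2).toNNReal) = gf s (σ^2) c := by
    funext x
    simp only [ProbabilityTheory.gaussianPDFReal, gf, hcoe, hcdef]
  have hint1 : IntegrableOn (fun z => (z - u) * gf s (σ^2) c z) (Ioi u) := by
    have h1 := (gf_mul_integrable s (σ^2) c hV2).integrableOn (s := Ioi u)
    have h2 := ((gf_integrable s (σ^2) c hV2).integrableOn (s := Ioi u)).const_mul (s - u)
    exact MeasureTheory.IntegrableOn.congr_fun (h1.add h2) (fun z _ => by simp only [Pi.add_apply]; ring)
      measurableSet_Ioi
  have hφint : Integrable ((Ioi u).indicator (fun z => (z - u) * gf s (σ^2) c z)) :=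
    hint1.integrable_indicator measurableSet_Ioi
  have hφnn : 0 ≤ᵐ[volume] ((Ioi u).indicator (fun z => (z - u) * gf s (σ^2) c z)) := by
    refine ae_of_all _ fun z => ?_
    apply Set.indicator_nonneg
    intro z hz
    exact mul_nonneg (by exact sub_nonneg.mpr hz.le) (gf_nonneg c hc z)
  rw [gaussianReal_of_var_ne_zero s hV]
  rw [MeasureTheory.lintegral_withDensity_eq_lintegral_mul _ (measurable_gaussianPDF _ _)
    (by measurability : Measurable fun z : ℝ => ENNReal.ofReal (z - u))]
  have hptwise : ∀ z : ℝ, (gaussianPDF s ((σ^2).toNNReal) * fun z => ENNReal.ofReal (z - u)) z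
      = ENNReal.ofReal ((Ioi u).indicator (fun z => (z - u) * gf s (σ^2) c z) z) := by
    intro z
    simp only [Pi.mul_apply, gaussianPDF, hpdf]
    by_cases hz : z ∈ Ioi u
    · rw [Set.indicator_of_mem hz, ← ENNReal.ofReal_mul (gf_nonneg c hc z)]
      ring_nf
    · rw [Set.indicator_of_notMem hz]
      have : z - u ≤ 0 := by simpa using (not_lt.mp hz)
      rw [ENNReal.ofReal_eq_zero.mpr this, mul_zero, ENNReal.ofReal_zero]
  rw [lintegral_congr hptwise]
  rw [← MeasureTheory.ofReal_integral_eq_lintegral_ofReal hφint hφnn]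
  -- right side
  have hIci : {z : ℝ | u ≤ z} = Ici u := rfl
  rw [hIci, withDensity_apply _ measurableSet_Ici]
  have hrhs : ∫⁻ z in Ici u, gaussianPDF s ((σ^2).toNNReal) z
      = ENNReal.ofReal (∫ z in Ioi u, gf s (σ^2) c z) := by
    rw [show (∫ z in Ioi u, gf s (σ^2) c z) = ∫ z in Ici u, gf s (σ^2) c z from
      (integral_Ici_eq_integral_Ioi).symm]
    rw [MeasureTheory.ofReal_integral_eq_lintegral_ofReal
      ((gf_integrable s (σ^2) c hV2).integrableOn)
      (ae_of_all _ fun z => gf_nonneg c hc z)]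
    simp only [gaussianPDF, hpdf]
  rw [hrhs]
  -- compute the left integral
  have hsplit : ∫ z, (Ioi u).indicator (fun z => (z - u) * gf s (σ^2) c z) z
      = σ^2 * gf s (σ^2) c u + (s - u) * ∫ z in Ioi u, gf s (σ^2) c z := by
    rw [integral_indicator measurableSet_Ioi]
    have h1 := (gf_mul_integrable s (σ^2) c hV2).integrableOn (s := Ioi u)
    have h2 := ((gf_integrable s (σ^2) c hV2).integrableOn (s := Ioi u)).const_mul (s - u)
    have : ∫ z in Ioi u, (z - u) * gf s (σ^2) c z
        = ∫ z in Ioi u, ((z - s) * gf s (σ^2) c z + (s - u) * gf s (σ^2) c z) := by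
      apply setIntegral_congr_fun measurableSet_Ioi
      intro z _
      ring
    rw [this, integral_add h1 h2, gf_integral_Ioi c hV2 u, integral_const_mul]
  rw [hsplit]
  rw [← ENNReal.ofReal_mul (by linarith : (0:ℝ) ≤ 2*s + 4*σ)]
  apply ENNReal.ofReal_le_ofReal
  have hcore := gf_core c hs hσ hc hu
  have hQ0 : 0 ≤ ∫ z in Ioi u, gf s (σ^2) c z := Qb_nonneg c hc u
  nlinarith [hcore, hQ0]

end GaussKey

section MainLemma

variable {Ω : Type*} [MeasurableSpace Ω]

lemma overshoot_bound_meas (P : Measure Ω) [IsProbabilityMeasure P]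
    (s σ : ℝ) (hs : 0 ≤ s) (hσ : 0 < σ)
    (Z : ℕ → Ω → ℝ) (hZm : ∀ i, Measurable (Z i))
    (hindep : iIndepFun Z P)
    (hZ : ∀ i, Measure.map (Z i) P = gaussianReal s ((σ ^ 2).toNNReal))
    (S : ℕ → Ω → ℝ) (hS : ∀ t ω, S t ω = ∑ i ∈ Finset.Icc 1 t, Z i ω)
    (μl : ℝ → Ω → ℕ) (hμl : ∀ l ω, μl l ω = sInf {t : ℕ | 1 ≤ t ∧ l ≤ S t ω})
    (l : ℝ) (hl : 0 ≤ l) :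
    ∫⁻ ω, ENNReal.ofReal (S (μl l ω) ω - l) ∂P ≤ ENNReal.ofReal (2 * s + 4 * σ) := by
  set K : ℝ≥0∞ := ENNReal.ofReal (2 * s + 4 * σ) with hK
  set F : Ω → ℝ≥0∞ := fun ω => ENNReal.ofReal (S (μl l ω) ω - l) with hF
  have hSm : ∀ t, Measurable (S t) := by
    intro t
    have : S t = fun ω => ∑ i ∈ Finset.Icc 1 t, Z i ω := funext (fun ω => hS t ω)
    rw [this]
    exact Finset.measurable_sum _ (fun i _ => hZm i)
  set A : ℕ → Set Ω := fun n => ⋂ j ∈ Finset.Icc 1 n, {ω | S j ω < l} with hA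
  have hAmeas : ∀ n, MeasurableSet (A n) := fun n =>
    MeasurableSet.biInter (Finset.Icc 1 n).countable_toSet
      (fun j _ => measurableSet_lt (hSm j) measurable_const)
  set E : ℕ → Set Ω := fun t => {ω | μl l ω = t} with hE
  have hEchar : ∀ n : ℕ, E (n + 1) = A n ∩ {ω | l ≤ S (n + 1) ω} := by
    intro n
    ext ω
    simp only [hE, Set.mem_setOf_eq, Set.mem_inter_iff, hA, Set.mem_iInter]
    rw [hμl]
    constructor
    · intro h
      have hne : {t : ℕ | 1 ≤ t ∧ l ≤ S t ω}.Nonempty := by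
        by_contra hcon
        rw [Set.not_nonempty_iff_eq_empty] at hcon
        rw [hcon, Nat.sInf_empty] at h
        omega
      have hmem := Nat.sInf_mem hne
      rw [h] at hmem
      refine ⟨fun j hj => ?_, hmem.2⟩
      rw [Finset.mem_Icc] at hj
      by_contra hcon
      push_neg at hcon
      have : sInf {t : ℕ | 1 ≤ t ∧ l ≤ S t ω} ≤ j := Nat.sInf_le ⟨hj.1, hcon⟩
      omega
    · rintro ⟨hA', hl'⟩
      have hmem : (n + 1) ∈ {t : ℕ | 1 ≤ t ∧ l ≤ S t ω} := ⟨by omega, hl'⟩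
      have h1 : sInf {t : ℕ | 1 ≤ t ∧ l ≤ S t ω} ≤ n + 1 := Nat.sInf_le hmem
      have h2 := Nat.sInf_mem (Set.nonempty_of_mem hmem)
      by_contra hcon
      have h3 : sInf {t : ℕ | 1 ≤ t ∧ l ≤ S t ω} ≤ n := by omega
      have h4 := hA' _ (Finset.mem_Icc.mpr ⟨h2.1, h3⟩)
      exact absurd h2.2 (not_le.mpr h4)
  have hEmeas : ∀ t, MeasurableSet (E t) := by
    intro t
    match t with
    | Nat.succ n =>
        rw [hEchar n]
        exact (hAmeas n).inter (measurableSet_le measurable_const (hSm (n + 1)))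
    | 0 =>
        have hcompl : E 0 = (⋃ n, E (n + 1))ᶜ := by
          ext ω
          simp only [hE, Set.mem_setOf_eq, Set.mem_compl_iff, Set.mem_iUnion]
          constructor
          · intro h hcon
            obtain ⟨n, hn⟩ := hcon
            omega
          · intro h
            by_contra hcon
            exact h ⟨μl l ω - 1, by omega⟩
        rw [hcompl]
        exact (MeasurableSet.iUnion (fun n => by
          rw [hEchar n]
          exact (hAmeas n).inter (measurableSet_le measurable_const (hSm (n + 1))))).compl
  have hEdisj : Pairwise (Function.onFun Disjoint E) := by
    intro i j hij
    simp only [Function.onFun]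
    rw [Set.disjoint_left]
    intro ω h1 h2
    simp only [hE, Set.mem_setOf_eq] at h1 h2
    exact hij (h1 ▸ h2 ▸ rfl)
  have hEunion : (⋃ t, E t) = Set.univ := by
    ext ω
    simp only [Set.mem_iUnion, Set.mem_univ, iff_true]
    exact ⟨μl l ω, rfl⟩
  -- the key step
  have hKEY : ∀ n : ℕ, ∫⁻ ω in A n, ENNReal.ofReal (S (n + 1) ω - l) ∂P ≤ K * P (E (n + 1)) := by
    intro n
    classical
    set W : Ω → ({x : ℕ // x ∈ Finset.Icc 1 n} → ℝ) := fun ω i => Z i ω with hW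
    have hWm : Measurable W := measurable_pi_lambda _ (fun i => hZm i)
    set Gp : ℕ → ({x : ℕ // x ∈ Finset.Icc 1 n} → ℝ) → ℝ :=
      fun j v => ∑ i ∈ Finset.univ.filter (fun i : {x : ℕ // x ∈ Finset.Icc 1 n} => (i : ℕ) ≤ j), v i with hGp
    have hGpm : ∀ j, Measurable (Gp j) := fun j =>
      Finset.measurable_sum _ (fun i _ => measurable_pi_apply i)
    have hGpS : ∀ (ω : Ω) (j : ℕ), j ≤ n → Gp j (W ω) = S j ω := by
      intro ω j hj
      rw [hS]
      simp only [hGp, hW]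
      rw [Finset.sum_filter]
      rw [← Finset.sum_subtype (Finset.Icc 1 n) (fun x => Iff.rfl)
        (fun i : ℕ => if i ≤ j then Z i ω else 0)]
      rw [← Finset.sum_filter]
      apply Finset.sum_congr ?_ (fun k _ => rfl)
      ext k
      simp only [Finset.mem_filter, Finset.mem_Icc]
      omega
    set B : Set ({x : ℕ // x ∈ Finset.Icc 1 n} → ℝ) :=
      ⋂ j ∈ Finset.Icc 1 n, {v | Gp j v < l} with hB
    have hAB : ∀ ω : Ω, ω ∈ A n ↔ W ω ∈ B := by
      intro ω
      simp only [hA, hB, Set.mem_iInter, Set.mem_setOf_eq]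
      refine forall₂_congr (fun j hj => ?_)
      rw [hGpS ω j (Finset.mem_Icc.mp hj).2]
    have hBmeas : MeasurableSet B :=
      MeasurableSet.biInter (Finset.Icc 1 n).countable_toSet
        (fun j _ => measurableSet_lt (hGpm j) measurable_const)
    have hBu : ∀ v ∈ B, 0 ≤ l - Gp n v := by
      intro v hv
      rcases Nat.eq_zero_or_pos n with h0 | hpos
      · subst h0
        have hz : Gp 0 v = 0 := by
          apply Finset.sum_eq_zero
          intro i _
          exfalso
          have h2 := i.2
          rw [Finset.mem_Icc] at h2
          omega
        rw [hz]
        linarith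
      · have hn : n ∈ Finset.Icc 1 n := Finset.mem_Icc.mpr ⟨hpos, le_rfl⟩
        have hlt := Set.mem_iInter₂.mp hv n hn
        simp only [Set.mem_setOf_eq] at hlt
        linarith
    have hdisj : Disjoint (Finset.Icc 1 n) ({n + 1} : Finset ℕ) := by
      rw [Finset.disjoint_singleton_right, Finset.mem_Icc]
      omega
    have hindepWZ : IndepFun W (Z (n + 1)) P := by
      have h := hindep.indepFun_finset (Finset.Icc 1 n) {n + 1} hdisj hZm
      have h2 := h.comp measurable_id
        (measurable_pi_apply (⟨n + 1, Finset.mem_singleton_self _⟩ :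
          ({x : ℕ // x ∈ ({n + 1} : Finset ℕ)})))
      exact h2
    have hpairm : Measurable (fun ω => (W ω, Z (n + 1) ω)) := hWm.prodMk (hZm (n + 1))
    haveI : IsProbabilityMeasure (P.map W) := Measure.isProbabilityMeasure_map hWm.aemeasurable
    have hmap : P.map (fun ω => (W ω, Z (n + 1) ω))
        = (P.map W).prod (gaussianReal s ((σ ^ 2).toNNReal)) := by
      rw [← hZ (n + 1)]
      exact (indepFun_iff_map_prod_eq_prod_map_map hWm.aemeasurable
        (hZm (n + 1)).aemeasurable).mp hindepWZ
    set γ : Measure ℝ := gaussianReal s ((σ ^ 2).toNNReal) with hγ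
    set Φ : ({x : ℕ // x ∈ Finset.Icc 1 n} → ℝ) × ℝ → ℝ≥0∞ :=
      (B ×ˢ (Set.univ : Set ℝ)).indicator (fun p => ENNReal.ofReal (Gp n p.1 + p.2 - l)) with hΦ
    set Ψ : ({x : ℕ // x ∈ Finset.Icc 1 n} → ℝ) × ℝ → ℝ≥0∞ :=
      ((B ×ˢ (Set.univ : Set ℝ)) ∩ {p | l ≤ Gp n p.1 + p.2}).indicator (fun _ => (1:ℝ≥0∞)) with hΨ
    have hBprod : MeasurableSet (B ×ˢ (Set.univ : Set ℝ)) := hBmeas.prod MeasurableSet.univ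
    have hΨset : MeasurableSet ((B ×ˢ (Set.univ : Set ℝ)) ∩ {p | l ≤ Gp n p.1 + p.2}) := by
      apply hBprod.inter
      exact measurableSet_le measurable_const (((hGpm n).comp measurable_fst).add measurable_snd)
    have hΦm : Measurable Φ := by
      apply Measurable.indicator _ hBprod
      exact ENNReal.measurable_ofReal.comp
        ((((hGpm n).comp measurable_fst).add measurable_snd).sub measurable_const)
    have hΨm : Measurable Ψ := measurable_const.indicator hΨset
    have hSsucc : ∀ ω, S (n + 1) ω = S n ω + Z (n + 1) ω := by
      intro ω
      rw [hS, hS, Finset.sum_Icc_succ_top (by omega : 1 ≤ n + 1)]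
    have hLHS : ∫⁻ ω in A n, ENNReal.ofReal (S (n + 1) ω - l) ∂P
        = ∫⁻ ω, Φ (W ω, Z (n + 1) ω) ∂P := by
      rw [← lintegral_indicator (hAmeas n)]
      apply lintegral_congr
      intro ω
      by_cases hω : ω ∈ A n
      · rw [Set.indicator_of_mem hω]
        have hmem : (W ω, Z (n + 1) ω) ∈ B ×ˢ (Set.univ : Set ℝ) :=
          ⟨(hAB ω).mp hω, Set.mem_univ _⟩
        rw [hΦ, Set.indicator_of_mem hmem]
        have : Gp n (W ω) + Z (n + 1) ω - l = S (n + 1) ω - l := by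
          rw [hGpS ω n le_rfl, ← hSsucc ω]
        rw [this]
      · rw [Set.indicator_of_notMem hω, hΦ,
          Set.indicator_of_notMem (fun hmem => hω ((hAB ω).mpr hmem.1))]
    have hinner : ∀ v, ∫⁻ z, Φ (v, z) ∂γ ≤ K * ∫⁻ z, Ψ (v, z) ∂γ := by
      intro v
      by_cases hv : v ∈ B
      · have hu := hBu v hv
        have h1 : (fun z => Φ (v, z)) = fun z : ℝ => ENNReal.ofReal (z - (l - Gp n v)) := by
          funext z
          rw [hΦ, Set.indicator_of_mem (show (v, z) ∈ B ×ˢ (Set.univ : Set ℝ) from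
            Set.mk_mem_prod hv (Set.mem_univ z))]
          congr 1
          ring
        have h2 : (fun z => Ψ (v, z))
            = fun z => ({z : ℝ | (l - Gp n v) ≤ z}).indicator (fun _ => (1:ℝ≥0∞)) z := by
          funext z
          by_cases hz : l ≤ Gp n v + z
          · rw [hΨ, Set.indicator_of_mem (show (v, z) ∈ (B ×ˢ (Set.univ : Set ℝ))
                ∩ {p | l ≤ Gp n p.1 + p.2} from
                Set.mem_inter (Set.mk_mem_prod hv (Set.mem_univ z)) hz),
              Set.indicator_of_mem (show z ∈ {z : ℝ | (l - Gp n v) ≤ z} by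
                simp only [Set.mem_setOf_eq]; linarith)]
          · rw [hΨ, Set.indicator_of_notMem (fun hmem => hz hmem.2),
              Set.indicator_of_notMem (show z ∉ {z : ℝ | (l - Gp n v) ≤ z} by
                simp only [Set.mem_setOf_eq]; intro hc; exact hz (by linarith))]
        have hms : MeasurableSet {z : ℝ | (l - Gp n v) ≤ z} := by
          have : {z : ℝ | (l - Gp n v) ≤ z} = Ici (l - Gp n v) := rfl
          rw [this]
          exact measurableSet_Ici
        rw [h1, h2, lintegral_indicator hms, setLIntegral_one]
        exact gauss_overshoot_step s σ hs hσ hu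
      · have h1 : ∀ z : ℝ, Φ (v, z) = 0 := fun z =>
          Set.indicator_of_notMem (fun hmem => hv hmem.1) _
        simp only [h1, lintegral_zero]
        exact zero_le'
    have hRHS : ∫⁻ ω, Ψ (W ω, Z (n + 1) ω) ∂P = P (E (n + 1)) := by
      have hcongr : ∀ ω, Ψ (W ω, Z (n + 1) ω)
          = (E (n + 1)).indicator (fun _ => (1 : ℝ≥0∞)) ω := by
        intro ω
        by_cases hω : ω ∈ E (n + 1)
        · have hω' : ω ∈ A n ∩ {ω | l ≤ S (n + 1) ω} := (hEchar n) ▸ hω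
          have hmem : (W ω, Z (n + 1) ω) ∈ (B ×ˢ (Set.univ : Set ℝ))
              ∩ {p | l ≤ Gp n p.1 + p.2} := by
            refine ⟨⟨(hAB ω).mp hω'.1, Set.mem_univ _⟩, ?_⟩
            simp only [Set.mem_setOf_eq]
            rw [hGpS ω n le_rfl, ← hSsucc ω]
            exact hω'.2
          rw [hΨ, Set.indicator_of_mem hmem, Set.indicator_of_mem hω]
        · have hω' : ω ∉ A n ∩ {ω | l ≤ S (n + 1) ω} := by rw [← hEchar n]; exact hω
          have hmem : (W ω, Z (n + 1) ω) ∉ (B ×ˢ (Set.univ : Set ℝ))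
              ∩ {p | l ≤ Gp n p.1 + p.2} := by
            intro hmem
            apply hω'
            refine ⟨(hAB ω).mpr hmem.1.1, ?_⟩
            have h3 := hmem.2
            simp only [Set.mem_setOf_eq] at h3 ⊢
            rw [hGpS ω n le_rfl, ← hSsucc ω] at h3
            exact h3
          rw [hΨ, Set.indicator_of_notMem hmem, Set.indicator_of_notMem hω]
      calc ∫⁻ ω, Ψ (W ω, Z (n + 1) ω) ∂P
          = ∫⁻ ω, (E (n + 1)).indicator (fun _ => (1 : ℝ≥0∞)) ω ∂P := lintegral_congr hcongr
        _ = P (E (n + 1)) := by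
            rw [lintegral_indicator (hEmeas (n + 1))]
            exact setLIntegral_one _
    calc ∫⁻ ω in A n, ENNReal.ofReal (S (n + 1) ω - l) ∂P
        = ∫⁻ ω, Φ (W ω, Z (n + 1) ω) ∂P := hLHS
      _ = ∫⁻ p, Φ p ∂(P.map (fun ω => (W ω, Z (n + 1) ω))) := (lintegral_map hΦm hpairm).symm
      _ = ∫⁻ p, Φ p ∂((P.map W).prod γ) := by rw [hmap]
      _ = ∫⁻ v, ∫⁻ z, Φ (v, z) ∂γ ∂(P.map W) := lintegral_prod _ hΦm.aemeasurable
      _ ≤ ∫⁻ v, K * ∫⁻ z, Ψ (v, z) ∂γ ∂(P.map W) := lintegral_mono hinner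
      _ = K * ∫⁻ v, ∫⁻ z, Ψ (v, z) ∂γ ∂(P.map W) := lintegral_const_mul' K _ ENNReal.ofReal_ne_top
      _ = K * ∫⁻ p, Ψ p ∂((P.map W).prod γ) := by rw [← lintegral_prod _ hΨm.aemeasurable]
      _ = K * ∫⁻ ω, Ψ (W ω, Z (n + 1) ω) ∂P := by rw [← hmap, lintegral_map hΨm hpairm]
      _ = K * P (E (n + 1)) := by rw [hRHS]
  -- per-piece bounds
  have hpiece : ∀ t : ℕ, ∫⁻ ω in E t, F ω ∂P ≤ K * P (E t) := by
    intro t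
    match t with
    | 0 =>
        have hcongr : ∀ ω, ω ∈ E 0 → F ω = (fun _ => (0:ℝ≥0∞)) ω := by
          intro ω hω
          simp only [hF]
          have h0 : μl l ω = 0 := hω
          rw [h0, hS]
          rw [show Finset.Icc 1 0 = ∅ from Finset.Icc_eq_empty (by omega)]
          simp only [Finset.sum_empty]
          exact ENNReal.ofReal_eq_zero.mpr (by linarith)
        have hzero : ∫⁻ ω in E 0, F ω ∂P = 0 := by
          rw [setLIntegral_congr_fun (hEmeas 0) (fun ω hω => hcongr ω hω)]
          exact lintegral_zero
        rw [hzero]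
        exact zero_le'
    | Nat.succ n =>
        have hstep1 : ∫⁻ ω in E (n + 1), F ω ∂P
            = ∫⁻ ω in E (n + 1), ENNReal.ofReal (S (n + 1) ω - l) ∂P := by
          apply setLIntegral_congr_fun (hEmeas (n + 1)) (fun ω hω => ?_)
          have h0 : μl l ω = n + 1 := hω
          simp only [hF, h0]
        have hstep2 : ∫⁻ ω in E (n + 1), ENNReal.ofReal (S (n + 1) ω - l) ∂P
            ≤ ∫⁻ ω in A n, ENNReal.ofReal (S (n + 1) ω - l) ∂P := by
          apply lintegral_mono_set
          rw [hEchar n]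
          exact Set.inter_subset_left
        calc ∫⁻ ω in E (n + 1), F ω ∂P
            = _ := hstep1
          _ ≤ _ := hstep2
          _ ≤ K * P (E (n + 1)) := hKEY n
  -- assemble
  have hdecomp : ∫⁻ ω, F ω ∂P = ∑' t, ∫⁻ ω in E t, F ω ∂P := by
    rw [← lintegral_iUnion hEmeas hEdisj F, hEunion, Measure.restrict_univ]
  calc ∫⁻ ω, F ω ∂P = ∑' t, ∫⁻ ω in E t, F ω ∂P := hdecomp
    _ ≤ ∑' t, K * P (E t) := ENNReal.tsum_le_tsum hpiece
    _ = K * ∑' t, P (E t) := ENNReal.tsum_mul_left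
    _ = K * P (⋃ t, E t) := by rw [measure_iUnion hEdisj hEmeas]
    _ = K := by rw [hEunion, measure_univ, mul_one]

end MainLemma

end OvershootAux

/-- **Corollary (Gaussian overshoot bound).** Let `Z₁, Z₂, …` be i.i.d. Gaussian random
variables with mean `s ≥ 0` and variance `σ² > 0`.  With `S_t = Z₁ + ⋯ + Z_t`,
`μ_l = inf{t ≥ 1 : S_t ≥ l}` and overshoot `R_{μ_l} = S_{μ_l} - l`, one has
`sup_{l ≥ 0} E(R_{μ_l}) ≤ 2s + 4σ`. -/
theorem gaussian_overshoot_bound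
    {Ω : Type*} [MeasurableSpace Ω] (P : Measure Ω) [IsProbabilityMeasure P]
    (s σ : ℝ) (hs : 0 ≤ s) (hσ : 0 < σ)
    (Z : ℕ → Ω → ℝ)
    (hindep : iIndepFun Z P)
    (hZ : ∀ i, Measure.map (Z i) P = gaussianReal s ((σ ^ 2).toNNReal))
    (S : ℕ → Ω → ℝ) (hS : ∀ t ω, S t ω = ∑ i ∈ Finset.Icc 1 t, Z i ω)
    (μl : ℝ → Ω → ℕ) (hμl : ∀ l ω, μl l ω = sInf {t : ℕ | 1 ≤ t ∧ l ≤ S t ω}) :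
    ∀ l : ℝ, 0 ≤ l →
      ∫⁻ ω, ENNReal.ofReal (S (μl l ω) ω - l) ∂P ≤ ENNReal.ofReal (2 * s + 4 * σ) := by
  intro l hl
  -- each Z i is a.e. measurable
  have hZae : ∀ i, AEMeasurable (Z i) P := by
    intro i
    by_contra hcon
    have h0 := Measure.map_of_not_aemeasurable hcon
    rw [hZ i] at h0
    have h1 : (gaussianReal s ((σ ^ 2).toNNReal)) Set.univ = 1 := measure_univ
    rw [h0] at h1
    simp at h1
  set Z' : ℕ → Ω → ℝ := fun i => (hZae i).mk (Z i) with hZ'def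
  have hZ'm : ∀ i, Measurable (Z' i) := fun i => (hZae i).measurable_mk
  have hae : ∀ i, Z i =ᵐ[P] Z' i := fun i => (hZae i).ae_eq_mk
  -- independence transfers to the measurable modification
  have hindep' : iIndepFun Z' P := by
    rw [iIndepFun_iff_measure_inter_preimage_eq_mul] at hindep ⊢
    intro T sets hsets
    have hall : ∀ᵐ ω ∂P, ∀ i ∈ T, Z i ω = Z' i ω := by
      rw [Filter.eventually_all_finset]
      exact fun i _ => hae i
    have hIeq : P (⋂ i ∈ T, Z' i ⁻¹' sets i) = P (⋂ i ∈ T, Z i ⁻¹' sets i) := by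
      apply measure_congr
      filter_upwards [hall] with ω hω
      change (ω ∈ ⋂ i ∈ T, Z' i ⁻¹' sets i) = (ω ∈ ⋂ i ∈ T, Z i ⁻¹' sets i)
      simp only [Set.mem_iInter, Set.mem_preimage, eq_iff_iff]
      exact forall₂_congr fun i hi => by rw [hω i hi]
    have hPeq : ∀ i ∈ T, P (Z' i ⁻¹' sets i) = P (Z i ⁻¹' sets i) := by
      intro i _
      apply measure_congr
      filter_upwards [hae i] with ω hω
      change (ω ∈ Z' i ⁻¹' sets i) = (ω ∈ Z i ⁻¹' sets i)
      simp only [Set.mem_preimage, eq_iff_iff]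
      rw [hω]
    rw [hIeq, hindep T hsets]
    exact (Finset.prod_congr rfl (fun i hi => (hPeq i hi))).symm
  have hZ'map : ∀ i, Measure.map (Z' i) P = gaussianReal s ((σ ^ 2).toNNReal) := by
    intro i
    rw [← Measure.map_congr (hae i), hZ i]
  set S' : ℕ → Ω → ℝ := fun t ω => ∑ i ∈ Finset.Icc 1 t, Z' i ω with hS'def
  set μl' : ℝ → Ω → ℕ := fun l ω => sInf {t : ℕ | 1 ≤ t ∧ l ≤ S' t ω} with hμl'def
  have hmain := overshoot_bound_meas P s σ hs hσ Z' hZ'm hindep' hZ'map S'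
    (fun t ω => rfl) μl' (fun l ω => rfl) l hl
  have haeall : ∀ᵐ ω ∂P, ∀ i, Z i ω = Z' i ω := ae_all_iff.mpr hae
  have hcongr : ∫⁻ ω, ENNReal.ofReal (S (μl l ω) ω - l) ∂P
      = ∫⁻ ω, ENNReal.ofReal (S' (μl' l ω) ω - l) ∂P := by
    apply lintegral_congr_ae
    filter_upwards [haeall] with ω hω
    have hSeq : ∀ t, S t ω = S' t ω := by
      intro t
      rw [hS]
      exact Finset.sum_congr rfl (fun i _ => hω i)
    have hμeq : μl l ω = μl' l ω := by
      rw [hμl]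
      congr 1
      ext t
      simp only [Set.mem_setOf_eq, hSeq t]
    rw [hμeq, hSeq (μl' l ω)]
  rw [hcongr]
  exact hmain
end

section
/- For all l > 0 and s > 0, the overshoot of the drift-s Gaussian random walk X over level l satisfies E(X_{τ_l} − l) ≤ 2s + 4. -/
open MeasureTheory ProbabilityTheory Real Filter
open scoped ENNReal NNReal

section OvershootAux
open Set

noncomputable def gphi (x : ℝ) : ℝ := (Real.sqrt (2 * π))⁻¹ * rexp (-x ^ 2 / 2)

lemma gphi_eq_pdf : gphi = gaussianPDFReal 0 1 := by
  ext x
  simp [gphi, gaussianPDFReal]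

lemma gphi_nonneg (x : ℝ) : 0 ≤ gphi x := by
  unfold gphi; positivity

lemma gphi_le_gphi_zero (x : ℝ) : gphi x ≤ gphi 0 := by
  unfold gphi
  have h : rexp (-x ^ 2 / 2) ≤ rexp (-(0:ℝ) ^ 2 / 2) :=
    Real.exp_le_exp.2 (by nlinarith [sq_nonneg x])
  exact mul_le_mul_of_nonneg_left h (by positivity)

lemma gphi_zero_le : gphi 0 ≤ 2 / 5 := by
  unfold gphi
  rw [show (0:ℝ)^2 = 0 by ring, neg_zero, zero_div, Real.exp_zero, mul_one]
  rw [inv_le_comm₀ (by positivity) (by norm_num)]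
  rw [show (2/5 : ℝ)⁻¹ = 5/2 by norm_num]
  have h : ((5:ℝ)/2)^2 ≤ 2 * π := by nlinarith [Real.pi_gt_d6]
  nlinarith [Real.sq_sqrt (by positivity : (0:ℝ) ≤ 2*π), Real.sqrt_nonneg (2*π)]

lemma hasDerivAt_gphi (x : ℝ) : HasDerivAt gphi (-x * gphi x) x := by
  have h1 : HasDerivAt (fun x : ℝ => -x ^ 2 / 2) (-x) x := by
    have := ((hasDerivAt_pow 2 x).neg).div_const 2
    simpa using this.congr_deriv (by ring)
  have h2 := (h1.exp).const_mul (Real.sqrt (2 * π))⁻¹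
  unfold gphi
  exact h2.congr_deriv (by ring)

lemma integrable_gphi : Integrable gphi := by
  rw [gphi_eq_pdf]; exact integrable_gaussianPDFReal 0 1

lemma integrable_mul_gphi : Integrable (fun x => x * gphi x) := by
  have h := integrable_mul_exp_neg_mul_sq (b := 1/2) (by norm_num)
  have : (fun x : ℝ => x * gphi x) = fun x => (Real.sqrt (2*π))⁻¹ * (x * rexp (-(1/2) * x ^ 2)) := by
    ext x; unfold gphi; ring_nf
  rw [this]
  exact (h.const_mul _)

lemma tendsto_gphi_atTop : Tendsto gphi atTop (nhds 0) := by
  have h : Tendsto (fun x : ℝ => -x ^ 2 / 2) atTop atBot := by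
    apply Tendsto.atBot_div_const (by norm_num)
    exact tendsto_neg_atBot_iff.2 (tendsto_pow_atTop (by norm_num))
  have h2 := (Real.tendsto_exp_atBot.comp h).const_mul (Real.sqrt (2 * π))⁻¹
  rw [mul_zero] at h2
  exact h2

noncomputable def gQ (d : ℝ) : ℝ := ∫ x in Ioi d, gphi x

lemma gQ_nonneg (d : ℝ) : 0 ≤ gQ d :=
  setIntegral_nonneg measurableSet_Ioi fun x _ => gphi_nonneg x

lemma hasDerivAt_neg_gphi (x : ℝ) : HasDerivAt (fun y => -gphi y) (x * gphi x) x := by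
  have h := (hasDerivAt_gphi x).neg
  exact h.congr_deriv (by ring)

lemma integral_xphi_Ioi (d : ℝ) : ∫ x in Ioi d, x * gphi x = gphi d := by
  have h := integral_Ioi_of_hasDerivAt_of_tendsto
    (f := fun x => -gphi x) (f' := fun x => x * gphi x) (a := d)
    ((hasDerivAt_neg_gphi d).continuousAt.continuousWithinAt)
    (fun x _ => hasDerivAt_neg_gphi x)
    (integrable_mul_gphi.integrableOn)
    (by simpa using tendsto_gphi_atTop.neg)
  simpa using h

lemma gE_eq (d : ℝ) : ∫ x in Ioi d, (x - d) * gphi x = gphi d - d * gQ d := by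
  have h1 : IntegrableOn (fun x => x * gphi x) (Ioi d) := integrable_mul_gphi.integrableOn
  have h2 : IntegrableOn (fun x => d * gphi x) (Ioi d) :=
    (integrable_gphi.const_mul d).integrableOn
  have : ∀ x, (x - d) * gphi x = x * gphi x - d * gphi x := fun x => by ring
  rw [show (fun x => (x - d) * gphi x) = fun x => x * gphi x - d * gphi x from funext this]
  rw [integral_sub h1 h2, integral_xphi_Ioi, integral_const_mul]
  rfl

lemma gQ_mono {d e : ℝ} (h : d ≤ e) : gQ e ≤ gQ d := by
  apply setIntegral_mono_set integrable_gphi.integrableOn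
    (ae_of_all _ fun x => gphi_nonneg x)
  exact HasSubset.Subset.eventuallyLE (Ioi_subset_Ioi h)

lemma gQ_zero : gQ 0 = 1/2 := by
  have htot : ∫ x, gphi x = 1 := by
    rw [gphi_eq_pdf]; exact integral_gaussianPDFReal_eq_one 0 one_ne_zero
  have hsplit : (∫ x in Iio (0:ℝ), gphi x) + ∫ x in Ici (0:ℝ), gphi x = ∫ x, gphi x :=
    intervalIntegral.integral_Iio_add_Ici integrable_gphi.integrableOn integrable_gphi.integrableOn
  have hsym : ∫ x in Iio (0:ℝ), gphi x = ∫ x in Ioi (0:ℝ), gphi x := by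
    have h := integral_comp_neg_Ioi (0:ℝ) gphi
    have heven : ∀ x : ℝ, gphi (-x) = gphi x := fun x => by unfold gphi; rw [neg_sq]
    simp only [heven, neg_zero] at h
    rw [← integral_Iic_eq_integral_Iio, ← h]
  rw [integral_Ici_eq_integral_Ioi, hsym, htot] at hsplit
  unfold gQ; linarith

lemma gQ_lower_small {d : ℝ} (hd : 0 ≤ d) : 1/2 - d * gphi 0 ≤ gQ d := by
  have hsplit : gQ 0 = (∫ x in Ioc 0 d, gphi x) + gQ d := by
    unfold gQ
    rw [← MeasureTheory.setIntegral_union (Set.Ioc_disjoint_Ioi le_rfl)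
      measurableSet_Ioi integrable_gphi.integrableOn integrable_gphi.integrableOn,
      Set.Ioc_union_Ioi_eq_Ioi hd]
  have hb : (∫ x in Ioc 0 d, gphi x) ≤ d * gphi 0 := by
    have := setIntegral_mono_on (s := Ioc (0:ℝ) d) (f := gphi) (g := fun _ => gphi 0)
      integrable_gphi.integrableOn
      (integrableOn_const measure_Ioc_lt_top.ne) measurableSet_Ioc
      (fun x _ => gphi_le_gphi_zero x)
    rw [setIntegral_const] at this
    simpa [Real.volume_Ioc, ENNReal.toReal_ofReal hd, mul_comm, max_eq_left hd] using this
  rw [gQ_zero] at hsplit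
  linarith

noncomputable def gG (x : ℝ) : ℝ := x / (x ^ 2 + 1) * gphi x

noncomputable def gG' (x : ℝ) : ℝ := gphi x * (1 - 2 * x ^ 2 - x ^ 4) / (x ^ 2 + 1) ^ 2

lemma continuous_gphi : Continuous gphi :=
  continuous_iff_continuousAt.2 fun x => (hasDerivAt_gphi x).continuousAt

lemma continuous_gG' : Continuous gG' := by
  unfold gG'
  apply Continuous.div
  · exact continuous_gphi.mul (by continuity)
  · continuity
  · intro x; positivity

lemma hasDerivAt_gG (x : ℝ) : HasDerivAt gG (gG' x) x := by
  have hden : (x ^ 2 + 1 : ℝ) ≠ 0 := by positivity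
  have hu : HasDerivAt (fun y : ℝ => y / (y ^ 2 + 1))
      ((1 * (x ^ 2 + 1) - x * (2 * x)) / (x ^ 2 + 1) ^ 2) x := by
    have h1 : HasDerivAt (fun y : ℝ => y) 1 x := hasDerivAt_id x
    have h2 : HasDerivAt (fun y : ℝ => y ^ 2 + 1) (2 * x) x := by
      simpa using (hasDerivAt_pow 2 x).add_const 1
    exact h1.div h2 hden
  have h := hu.mul (hasDerivAt_gphi x)
  unfold gG gG'
  refine h.congr_deriv ?_
  field_simp
  ring

lemma abs_gG'_le (x : ℝ) : |gG' x| ≤ gphi x := by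
  unfold gG'
  rw [abs_div, abs_mul, abs_of_nonneg (gphi_nonneg x), abs_of_nonneg (by positivity :
    (0:ℝ) ≤ (x ^ 2 + 1) ^ 2), div_le_iff₀ (by positivity)]
  have h1 : |1 - 2 * x ^ 2 - x ^ 4| ≤ (x ^ 2 + 1) ^ 2 := by
    rw [abs_le]; constructor <;> nlinarith [sq_nonneg x, sq_nonneg (x^2)]
  calc gphi x * |1 - 2 * x ^ 2 - x ^ 4| ≤ gphi x * (x ^ 2 + 1) ^ 2 :=
        mul_le_mul_of_nonneg_left h1 (gphi_nonneg x)
    _ = gphi x * (x ^ 2 + 1) ^ 2 := rfl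

lemma abs_gG_le (x : ℝ) : |gG x| ≤ gphi x := by
  unfold gG
  rw [abs_mul, abs_of_nonneg (gphi_nonneg x)]
  have h : |x / (x ^ 2 + 1)| ≤ 1 := by
    rw [abs_div, abs_of_nonneg (by positivity : (0:ℝ) ≤ x ^ 2 + 1), div_le_one (by positivity)]
    nlinarith [abs_nonneg x, sq_abs x, sq_nonneg (|x| - 1)]
  calc |x / (x ^ 2 + 1)| * gphi x ≤ 1 * gphi x := mul_le_mul_of_nonneg_right h (gphi_nonneg x)
    _ = gphi x := one_mul _

lemma tendsto_gG_atTop : Tendsto gG atTop (nhds 0) :=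
  squeeze_zero_norm (fun x => by simpa using abs_gG_le x) tendsto_gphi_atTop

lemma integrable_gG' : Integrable gG' :=
  integrable_gphi.mono continuous_gG'.aestronglyMeasurable
    (ae_of_all _ fun x => by
      simpa [abs_of_nonneg (gphi_nonneg x)] using abs_gG'_le x)

lemma integral_gG'_Ioi (d : ℝ) : ∫ x in Ioi d, gG' x = -gG d := by
  have h := integral_Ioi_of_hasDerivAt_of_tendsto (f := gG) (f' := gG') (a := d)
    (hasDerivAt_gG d).continuousAt.continuousWithinAt
    (fun x _ => hasDerivAt_gG x)
    integrable_gG'.integrableOn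
    tendsto_gG_atTop
  simpa using h

lemma mills (d : ℝ) : d / (d ^ 2 + 1) * gphi d ≤ gQ d := by
  have hadd : ∫ x in Ioi d, (gphi x + gG' x) = gQ d + -gG d := by
    rw [integral_add integrable_gphi.integrableOn integrable_gG'.integrableOn,
      integral_gG'_Ioi]
    rfl
  have hnn : 0 ≤ ∫ x in Ioi d, (gphi x + gG' x) := by
    apply setIntegral_nonneg measurableSet_Ioi
    intro x _
    unfold gG'
    have h2 : (-1 : ℝ) ≤ (1 - 2 * x ^ 2 - x ^ 4) / (x ^ 2 + 1) ^ 2 := by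
      rw [le_div_iff₀ (by positivity)]
      nlinarith [sq_nonneg x, sq_nonneg (x^2)]
    have h3 : gphi x * (1 - 2 * x ^ 2 - x ^ 4) / (x ^ 2 + 1) ^ 2
        = gphi x * ((1 - 2 * x ^ 2 - x ^ 4) / (x ^ 2 + 1) ^ 2) := by ring
    rw [h3]
    nlinarith [gphi_nonneg x, mul_le_mul_of_nonneg_left h2 (gphi_nonneg x)]
  unfold gG at hadd
  linarith

lemma key_real {s d : ℝ} (hs : 0 < s) (hd : -s < d) :
    gphi d - d * gQ d ≤ (2 * s + 4) * gQ d := by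
  have hQnn := gQ_nonneg d
  have key : gphi d ≤ (2 * s + 4 + d) * gQ d := by
    rcases le_or_gt d 0 with h0 | h0
    · have hQ : (1:ℝ)/2 ≤ gQ d := by rw [← gQ_zero]; exact gQ_mono h0
      have hphi : gphi d ≤ 2/5 := (gphi_le_gphi_zero d).trans gphi_zero_le
      nlinarith
    rcases le_or_gt d (1/2) with h1 | h1
    · have hQ := gQ_lower_small h0.le
      have hphi : gphi d ≤ 2/5 := (gphi_le_gphi_zero d).trans gphi_zero_le
      have hphi0 : gphi 0 ≤ 2/5 := gphi_zero_le
      have hphi0' : 0 ≤ gphi 0 := gphi_nonneg 0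
      nlinarith
    · have hm := mills d
      have hpos : (0:ℝ) < 2 * s + 4 + d := by linarith
      have h2 := mul_le_mul_of_nonneg_left hm hpos.le
      have hden : (0:ℝ) < d ^ 2 + 1 := by positivity
      have h3 : gphi d ≤ (2 * s + 4 + d) * (d / (d ^ 2 + 1) * gphi d) := by
        rw [div_mul_eq_mul_div, mul_div_assoc', le_div_iff₀ hden]
        nlinarith [mul_nonneg (gphi_nonneg d) (by nlinarith : (0:ℝ) ≤ (2*s+4+d)*d - (d^2+1))]
      linarith
  nlinarith

lemma gauss_core {s y : ℝ} (hs : 0 < s) (hy : 0 < y) :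
    ∫⁻ v, ENNReal.ofReal (s + v - y) ∂(gaussianReal 0 1)
      ≤ ENNReal.ofReal (2 * s + 4) * gaussianReal 0 1 {v | y ≤ s + v} := by
  set d := y - s with hd
  have hset : {v : ℝ | y ≤ s + v} = Ici d := by
    ext v; simp [hd]; constructor <;> intro h <;> linarith
  -- RHS measure
  have hmeas : gaussianReal 0 1 {v | y ≤ s + v} = ENNReal.ofReal (gQ d) := by
    rw [hset, gaussianReal_apply_eq_integral _ one_ne_zero _]
    rw [← gphi_eq_pdf, integral_Ici_eq_integral_Ioi]
    rfl
  -- LHS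
  have hpdf : gaussianReal 0 1 = volume.withDensity (gaussianPDF 0 1) :=
    gaussianReal_of_var_ne_zero 0 one_ne_zero
  have hmble : Measurable fun v : ℝ => ENNReal.ofReal (s + v - y) := by
    exact ENNReal.measurable_ofReal.comp ((measurable_const.add measurable_id).sub measurable_const)
  have hLHS : ∫⁻ v, ENNReal.ofReal (s + v - y) ∂(gaussianReal 0 1)
      = ∫⁻ v, ENNReal.ofReal ((Ioi d).indicator (fun x => (x - d) * gphi x) v) := by
    rw [hpdf, lintegral_withDensity_eq_lintegral_mul _ (measurable_gaussianPDF 0 1) hmble]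
    congr 1
    ext v
    rw [Pi.mul_apply, gaussianPDF, ← gphi_eq_pdf]
    rcases le_or_gt v d with h | h
    · have h1 : s + v - y ≤ 0 := by simp [hd] at h ⊢; linarith
      rw [Set.indicator_of_notMem (by simpa using h)]
      simp [ENNReal.ofReal_eq_zero.2 h1]
    · rw [Set.indicator_of_mem (by simpa using h), ← ENNReal.ofReal_mul (gphi_nonneg v)]
      congr 1
      rw [hd]
      ring
  rw [hLHS, hmeas]
  have hint : Integrable ((Ioi d).indicator fun x => (x - d) * gphi x) :=
    (integrable_mul_gphi.sub (integrable_gphi.const_mul d) |>.congr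
      (ae_of_all _ fun x => by simp; ring)).indicator measurableSet_Ioi
  have hnn : 0 ≤ᵐ[volume] (Ioi d).indicator fun x => (x - d) * gphi x := by
    refine ae_of_all _ fun x => Set.indicator_nonneg (fun x hx => ?_) x
    exact mul_nonneg (by simp at hx; linarith) (gphi_nonneg x)
  rw [← ofReal_integral_eq_lintegral_ofReal hint hnn]
  rw [MeasureTheory.integral_indicator measurableSet_Ioi, gE_eq]
  rw [← ENNReal.ofReal_mul (by linarith)]
  exact ENNReal.ofReal_le_ofReal (key_real hs (by simp [hd]; linarith))

section Master

variable {Ω : Type*} [MeasurableSpace Ω] (P : Measure Ω) [IsProbabilityMeasure P]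

lemma overshoot_term_bound (s l : ℝ) (hs : 0 < s) (hl : 0 < l)
    (V : ℕ → Ω → ℝ) (hmeas : ∀ i, Measurable (V i))
    (hindep : iIndepFun V P)
    (hV : ∀ i, Measure.map (V i) P = gaussianReal 0 1)
    (X : ℕ → Ω → ℝ) (hX : ∀ t ω, X t ω = s * t + ∑ i ∈ Finset.Icc 1 t, V i ω)
    (n : ℕ) (A : Set Ω)
    (hA : ∀ ω, ω ∈ A ↔ ((∀ u, u < n + 1 → X u ω < l) ∧ l ≤ X (n + 1) ω)) :
    ∫⁻ ω, A.indicator (fun ω => ENNReal.ofReal (X (n+1) ω - l)) ω ∂P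
      ≤ ENNReal.ofReal (2 * s + 4) * P A := by
  classical
  set K := ENNReal.ofReal (2 * s + 4) with hK
  -- the "past" tuple
  set E := ({i // i ∈ Finset.range (n+1)} → ℝ) with hE
  set W : Ω → E := fun ω i => V i ω with hW
  have hWmeas : Measurable W := measurable_pi_lambda _ fun i => hmeas i
  -- functions on E
  set Xf : ℕ → E → ℝ := fun u w => s * u + ∑ i ∈ Finset.Icc 1 u,
    (if h : i ∈ Finset.range (n+1) then w ⟨i, h⟩ else 0) with hXf
  have hXfmeas : ∀ u, Measurable (Xf u) := by
    intro u
    apply Measurable.const_add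
    apply Finset.measurable_sum
    intro i _
    split_ifs with h
    · exact measurable_pi_apply _
    · exact measurable_const
  have hXfW : ∀ u, u ≤ n → ∀ ω, Xf u (W ω) = X u ω := by
    intro u hu ω
    rw [hX]
    simp only [hXf]
    congr 1
    apply Finset.sum_congr rfl
    intro i hi
    have hi' : i ∈ Finset.range (n+1) := by
      simp only [Finset.mem_Icc] at hi
      simp only [Finset.mem_range]
      omega
    rw [dif_pos hi']
  set Bs : Set E := {w | ∀ u, u < n + 1 → Xf u w < l} with hBs
  have hBsmeas : MeasurableSet Bs := by
    have : Bs = ⋂ u ∈ Finset.range (n+1), {w : E | Xf u w < l} := by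
      ext w; simp [hBs, Finset.mem_range]
    rw [this]
    exact Finset.measurableSet_biInter _ fun u _ =>
      measurableSet_lt (hXfmeas u) measurable_const
  set Y : E → ℝ := fun w => l - Xf n w with hY
  have hYmeas : Measurable Y := measurable_const.sub (hXfmeas n)
  have hstep : ∀ ω, X (n+1) ω - l = s + V (n+1) ω - Y (W ω) := by
    intro ω
    rw [hY]
    simp only
    rw [hXfW n le_rfl ω, hX (n+1), hX n, Finset.sum_Icc_succ_top (by omega : 1 ≤ n + 1)]
    push_cast
    ring
  -- independence
  have hindep2 : IndepFun W (V (n+1)) P := by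
    have hdisj : Disjoint (Finset.range (n+1)) ({n+1} : Finset ℕ) := by
      simp [Finset.disjoint_singleton_right]
    have h := hindep.indepFun_finset (Finset.range (n+1)) {n+1} hdisj hmeas
    have h2 := h.comp (measurable_id (α := E))
      (measurable_pi_apply (⟨n+1, by simp⟩ : ({n+1} : Finset ℕ)))
    exact h2
  -- the function on the product space
  set F : E × ℝ → ℝ≥0∞ := fun p =>
    Bs.indicator (fun _ => (1:ℝ≥0∞)) p.1 * ENNReal.ofReal (s + p.2 - Y p.1) with hF
  have hFmeas : Measurable F :=
    ((measurable_one.indicator hBsmeas).comp measurable_fst).mul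
      (ENNReal.measurable_ofReal.comp
        ((measurable_const.add measurable_snd).sub (hYmeas.comp measurable_fst)))
  have claim1 : ∀ ω, A.indicator (fun ω => ENNReal.ofReal (X (n+1) ω - l)) ω
      = F (W ω, V (n+1) ω) := by
    intro ω
    have hBsW : W ω ∈ Bs ↔ ∀ u, u < n + 1 → X u ω < l := by
      constructor
      · intro h u hu
        rw [← hXfW u (by omega) ω]; exact h u hu
      · intro h u hu
        rw [hXfW u (by omega) ω]; exact h u hu
    by_cases hA1 : ω ∈ A
    · obtain ⟨h1, h2⟩ := (hA ω).1 hA1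
      rw [Set.indicator_of_mem hA1, hF]
      simp only
      rw [Set.indicator_of_mem (hBsW.2 h1), one_mul, ← hstep ω]
    · rw [Set.indicator_of_notMem hA1, hF]
      simp only
      by_cases hB1 : W ω ∈ Bs
      · have h2 : ¬ l ≤ X (n+1) ω := fun hc => hA1 ((hA ω).2 ⟨hBsW.1 hB1, hc⟩)
        have : s + V (n+1) ω - Y (W ω) ≤ 0 := by
          rw [← hstep ω]; linarith [not_le.1 h2]
        rw [ENNReal.ofReal_eq_zero.2 this, mul_zero]
      · rw [Set.indicator_of_notMem hB1, zero_mul]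
  -- PRODUCT space manipulations
  set pair : Ω → E × ℝ := fun ω => (W ω, V (n+1) ω) with hpair
  have hpairmeas : Measurable pair := hWmeas.prodMk (hmeas (n+1))
  have hγ : P.map (V (n+1)) = gaussianReal 0 1 := hV (n+1)
  have hprod : P.map pair = (P.map W).prod (P.map (V (n+1))) :=
    (indepFun_iff_map_prod_eq_prod_map_map hWmeas.aemeasurable
      (hmeas (n+1)).aemeasurable).1 hindep2
  have hinst : IsProbabilityMeasure (P.map W) := Measure.isProbabilityMeasure_map hWmeas.aemeasurable
  set Sset : Set (E × ℝ) := {p : E × ℝ | p.1 ∈ Bs ∧ Y p.1 ≤ s + p.2} with hSset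
  have hSsetmeas : MeasurableSet Sset :=
    (hBsmeas.preimage measurable_fst).inter
      (measurableSet_le (hYmeas.comp measurable_fst) (measurable_const.add measurable_snd))
  have hBsW : ∀ ω, W ω ∈ Bs ↔ ∀ u, u < n + 1 → X u ω < l := by
    intro ω
    constructor
    · intro h u hu
      rw [← hXfW u (by omega) ω]; exact h u hu
    · intro h u hu
      rw [hXfW u (by omega) ω]; exact h u hu
  have hpreim : pair ⁻¹' Sset = A := by
    ext ω
    simp only [hSset, Set.mem_preimage, Set.mem_setOf_eq, hpair]
    rw [hA ω, hBsW ω]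
    constructor
    · rintro ⟨h1, h2⟩
      refine ⟨h1, ?_⟩
      have := hstep ω
      linarith
    · rintro ⟨h1, h2⟩
      refine ⟨h1, ?_⟩
      have := hstep ω
      linarith
  calc ∫⁻ ω, A.indicator (fun ω => ENNReal.ofReal (X (n+1) ω - l)) ω ∂P
      = ∫⁻ ω, F (pair ω) ∂P := lintegral_congr claim1
    _ = ∫⁻ p, F p ∂(P.map pair) := (lintegral_map hFmeas hpairmeas).symm
    _ = ∫⁻ p, F p ∂((P.map W).prod (gaussianReal 0 1)) := by rw [hprod, hγ]
    _ = ∫⁻ w, ∫⁻ v, F (w, v) ∂(gaussianReal 0 1) ∂(P.map W) :=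
        MeasureTheory.lintegral_prod F hFmeas.aemeasurable
    _ ≤ ∫⁻ w, K * (Bs.indicator (fun _ => (1:ℝ≥0∞)) w
          * gaussianReal 0 1 {v | Y w ≤ s + v}) ∂(P.map W) := by
        apply lintegral_mono
        intro w
        by_cases hw : w ∈ Bs
        · simp only [hF, Set.indicator_of_mem hw, one_mul]
          have hy : 0 < Y w := by
            have := hw n (by omega)
            simp only [hY]
            linarith
          rw [hK]
          exact gauss_core hs hy
        · simp only [hF, Set.indicator_of_notMem hw, zero_mul, lintegral_zero, mul_zero]
          exact le_rfl
    _ = K * ∫⁻ w, Bs.indicator (fun _ => (1:ℝ≥0∞)) w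
          * gaussianReal 0 1 {v | Y w ≤ s + v} ∂(P.map W) :=
        lintegral_const_mul' _ _ ENNReal.ofReal_ne_top
    _ = K * ((P.map W).prod (gaussianReal 0 1)) Sset := by
        congr 1
        rw [Measure.prod_apply hSsetmeas]
        apply lintegral_congr
        intro w
        by_cases hw : w ∈ Bs
        · rw [Set.indicator_of_mem hw, one_mul]
          congr 1
          ext v
          simp [hSset, hw]
        · rw [Set.indicator_of_notMem hw, zero_mul]
          have : (Prod.mk w ⁻¹' Sset) = (∅ : Set ℝ) := by
            ext v; simp [hSset, hw]
          rw [this, measure_empty]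
    _ = K * P A := by
        rw [← hγ, ← hprod, Measure.map_apply hpairmeas hSsetmeas, hpreim]

lemma overshoot_master (s l : ℝ) (hs : 0 < s) (hl : 0 < l)
    (V : ℕ → Ω → ℝ) (hmeas : ∀ i, Measurable (V i))
    (hindep : iIndepFun V P)
    (hV : ∀ i, Measure.map (V i) P = gaussianReal 0 1)
    (X : ℕ → Ω → ℝ) (hX : ∀ t ω, X t ω = s * t + ∑ i ∈ Finset.Icc 1 t, V i ω)
    (τ : Ω → ℕ) (hτ : ∀ ω, τ ω = sInf {t : ℕ | l ≤ X t ω}) :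
    ∫⁻ ω, ENNReal.ofReal (X (τ ω) ω - l) ∂P ≤ ENNReal.ofReal (2 * s + 4) := by
  classical
  set K := ENNReal.ofReal (2 * s + 4) with hK
  have hXmeas : ∀ t, Measurable (X t) := by
    intro t
    have : X t = fun ω => s * t + ∑ i ∈ Finset.Icc 1 t, V i ω := funext (hX t)
    rw [this]
    exact measurable_const.add (Finset.measurable_sum _ fun i _ => hmeas i)
  have hX0 : ∀ ω, X 0 ω = 0 := by intro ω; rw [hX]; simp
  -- characterization of τ = n+1
  have hchar : ∀ n ω, τ ω = n + 1 ↔ ((∀ u, u < n + 1 → X u ω < l) ∧ l ≤ X (n+1) ω) := by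
    intro n ω
    rw [hτ]
    set S := {t : ℕ | l ≤ X t ω} with hS
    constructor
    · intro h
      have hne : S.Nonempty := by
        by_contra hc
        rw [Set.not_nonempty_iff_eq_empty] at hc
        rw [hc, Nat.sInf_empty] at h
        omega
      have hmem : sInf S ∈ S := Nat.sInf_mem hne
      rw [h] at hmem
      refine ⟨fun u hu => ?_, hmem⟩
      have : u ∉ S := Nat.notMem_of_lt_sInf (by omega)
      simpa [hS] using this
    · rintro ⟨h1, h2⟩
      have hmemS : n + 1 ∈ S := h2
      have hle : sInf S ≤ n + 1 := Nat.sInf_le hmemS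
      rcases Nat.lt_or_ge (sInf S) (n+1) with hlt | hge
      · exfalso
        have hmem : sInf S ∈ S := Nat.sInf_mem ⟨n+1, hmemS⟩
        exact absurd hmem (by simpa [hS] using h1 _ hlt)
      · omega
  -- measurability of τ
  have hsets : ∀ n : ℕ, MeasurableSet {ω | (∀ u, u < n + 1 → X u ω < l) ∧ l ≤ X (n+1) ω} := by
    intro n
    have heq : {ω | (∀ u, u < n+1 → X u ω < l) ∧ l ≤ X (n+1) ω}
        = (⋂ u ∈ Set.Iio (n+1), {ω | X u ω < l}) ∩ {ω | l ≤ X (n+1) ω} := by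
      ext ω; simp
    rw [heq]
    exact (MeasurableSet.biInter (Set.to_countable _) fun u _ =>
        measurableSet_lt (hXmeas u) measurable_const).inter
      (measurableSet_le measurable_const (hXmeas (n+1)))
  have hτmeas : Measurable τ := by
    apply measurable_to_countable'
    intro t
    match t with
    | 0 =>
      have : τ ⁻¹' {0} = (⋃ n : ℕ, τ ⁻¹' {n+1})ᶜ := by
        ext ω
        simp only [Set.mem_preimage, Set.mem_singleton_iff, Set.mem_compl_iff, Set.mem_iUnion]
        constructor
        · intro h hc; obtain ⟨n, hn⟩ := hc; omega
        · intro h; by_contra hc; exact h ⟨τ ω - 1, by omega⟩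
      rw [this]
      apply MeasurableSet.compl
      apply MeasurableSet.iUnion
      intro n
      have : τ ⁻¹' {n+1} = {ω | (∀ u, u < n + 1 → X u ω < l) ∧ l ≤ X (n+1) ω} := by
        ext ω; simp only [Set.mem_preimage, Set.mem_singleton_iff, Set.mem_setOf_eq]
        exact hchar n ω
      rw [this]
      exact hsets n
    | (n+1) =>
      have : τ ⁻¹' {n+1} = {ω | (∀ u, u < n + 1 → X u ω < l) ∧ l ≤ X (n+1) ω} := by
        ext ω; simp only [Set.mem_preimage, Set.mem_singleton_iff, Set.mem_setOf_eq]
        exact hchar n ω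
      rw [this]
      exact hsets n
  set A : ℕ → Set Ω := fun t => τ ⁻¹' {t} with hA
  have hAmeas : ∀ t, MeasurableSet (A t) := fun t => hτmeas (measurableSet_singleton t)
  have hdisj : Pairwise (Function.onFun Disjoint A) := by
    intro i j hij
    simp only [Function.onFun, hA]
    apply Set.disjoint_left.2
    intro ω h1 h2
    simp only [Set.mem_preimage, Set.mem_singleton_iff] at h1 h2
    exact hij (h1 ▸ h2 ▸ rfl)
  have hcover : (⋃ t, A t) = Set.univ := by
    ext ω; simp [hA]
  have hdecomp : ∫⁻ ω, ENNReal.ofReal (X (τ ω) ω - l) ∂P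
      = ∑' t, ∫⁻ ω in A t, ENNReal.ofReal (X (τ ω) ω - l) ∂P := by
    rw [← lintegral_iUnion hAmeas hdisj, hcover, setLIntegral_univ]
  rw [hdecomp]
  -- zero term
  have hzero : ∫⁻ ω in A 0, ENNReal.ofReal (X (τ ω) ω - l) ∂P = 0 := by
    have : ∫⁻ ω in A 0, ENNReal.ofReal (X (τ ω) ω - l) ∂P
        = ∫⁻ _ in A 0, 0 ∂P := by
      apply setLIntegral_congr_fun (hAmeas 0)
      intro ω hω
      have hτ0 : τ ω = 0 := hω
      show ENNReal.ofReal (X (τ ω) ω - l) = 0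
      rw [hτ0, hX0]
      exact ENNReal.ofReal_eq_zero.2 (by linarith)
    rw [this, lintegral_zero]
  -- positive terms
  have hterm : ∀ n : ℕ, ∫⁻ ω in A (n+1), ENNReal.ofReal (X (τ ω) ω - l) ∂P
      ≤ K * P (A (n+1)) := by
    intro n
    have hcongr : ∫⁻ ω in A (n+1), ENNReal.ofReal (X (τ ω) ω - l) ∂P
        = ∫⁻ ω, (A (n+1)).indicator (fun ω => ENNReal.ofReal (X (n+1) ω - l)) ω ∂P := by
      rw [← lintegral_indicator (hAmeas (n+1)) _]
      apply lintegral_congr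
      intro ω
      by_cases hω : ω ∈ A (n+1)
      · rw [Set.indicator_of_mem hω, Set.indicator_of_mem hω]
        have : τ ω = n + 1 := hω
        rw [this]
      · rw [Set.indicator_of_notMem hω, Set.indicator_of_notMem hω]
    rw [hcongr]
    exact overshoot_term_bound P s l hs hl V hmeas hindep hV X hX n (A (n+1))
      (fun ω => by
        have : ω ∈ A (n+1) ↔ τ ω = n + 1 := Iff.rfl
        rw [this, hchar n ω])
  calc ∑' t, ∫⁻ ω in A t, ENNReal.ofReal (X (τ ω) ω - l) ∂P
      ≤ ∑' t, K * P (A t) := by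
        apply ENNReal.tsum_le_tsum
        intro t
        match t with
        | 0 => rw [hzero]; exact zero_le
        | (n+1) => exact hterm n
    _ = K * ∑' t, P (A t) := ENNReal.tsum_mul_left
    _ = K * P (⋃ t, A t) := by rw [measure_iUnion hdisj hAmeas]
    _ = K := by rw [hcover, measure_univ, mul_one]

end Master

theorem gaussian_walk_overshoot_bound'
    {Ω : Type*} [MeasurableSpace Ω] (P : Measure Ω) [IsProbabilityMeasure P]
    (s l : ℝ) (hs : 0 < s) (hl : 0 < l)
    (V : ℕ → Ω → ℝ)
    (hindep : iIndepFun V P)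
    (hV : ∀ i, Measure.map (V i) P = gaussianReal 0 1)
    (X : ℕ → Ω → ℝ)
    (hX : ∀ t ω, X t ω = s * t + ∑ i ∈ Finset.Icc 1 t, V i ω)
    (τ : Ω → ℕ) (hτ : ∀ ω, τ ω = sInf {t : ℕ | l ≤ X t ω}) :
    ∫⁻ ω, ENNReal.ofReal (X (τ ω) ω - l) ∂P ≤ ENNReal.ofReal (2 * s + 4) := by
  classical
  have hAEM : ∀ i, AEMeasurable (V i) P := by
    intro i
    by_contra hc
    have h0 := Measure.map_of_not_aemeasurable hc
    rw [hV i] at h0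
    have h1 : (gaussianReal 0 1) Set.univ = 1 := measure_univ
    rw [h0] at h1
    simp at h1
  set V' : ℕ → Ω → ℝ := fun i => (hAEM i).mk (V i) with hV'def
  have hmeas' : ∀ i, Measurable (V' i) := fun i => (hAEM i).measurable_mk
  have haeeq : ∀ i, V i =ᵐ[P] V' i := fun i => (hAEM i).ae_eq_mk
  have hV' : ∀ i, Measure.map (V' i) P = gaussianReal 0 1 := fun i => by
    rw [← Measure.map_congr (haeeq i), hV i]
  have hsetae : ∀ i (t : Set ℝ), (V' i ⁻¹' t) =ᵐ[P] (V i ⁻¹' t) := by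
    intro i t
    rw [Filter.eventuallyEq_set]
    filter_upwards [haeeq i] with ω h
    simp [Set.mem_preimage, h]
  have hindep' : iIndepFun V' P := by
    rw [iIndepFun_iff_measure_inter_preimage_eq_mul] at hindep ⊢
    intro S sets hsets
    have h2 : P (⋂ i ∈ S, V' i ⁻¹' sets i) = P (⋂ i ∈ S, V i ⁻¹' sets i) := by
      apply measure_congr
      rw [Filter.eventuallyEq_set]
      have hall : ∀ᵐ ω ∂P, ∀ i, V i ω = V' i ω := ae_all_iff.2 fun i => haeeq i
      filter_upwards [hall] with ω hω'
      have hω : ∀ i ∈ S, (ω ∈ V' i ⁻¹' sets i ↔ ω ∈ V i ⁻¹' sets i) := by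
        intro i _
        simp [Set.mem_preimage, hω' i]
      simp only [Set.mem_iInter]
      exact ⟨fun h i hi => (hω i hi).1 (h i hi), fun h i hi => (hω i hi).2 (h i hi)⟩
    have h3 : ∀ i ∈ S, P (V' i ⁻¹' sets i) = P (V i ⁻¹' sets i) := fun i _ =>
      measure_congr (hsetae i (sets i))
    rw [h2, Finset.prod_congr rfl h3]
    exact hindep S hsets
  set X' : ℕ → Ω → ℝ := fun t ω => s * t + ∑ i ∈ Finset.Icc 1 t, V' i ω with hX'def
  set τ' : Ω → ℕ := fun ω => sInf {t : ℕ | l ≤ X' t ω} with hτ'def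
  have hmaster := overshoot_master P s l hs hl V' hmeas' hindep' hV' X'
    (fun t ω => rfl) τ' (fun ω => rfl)
  have hcongr : ∫⁻ ω, ENNReal.ofReal (X (τ ω) ω - l) ∂P
      = ∫⁻ ω, ENNReal.ofReal (X' (τ' ω) ω - l) ∂P := by
    apply lintegral_congr_ae
    have hae : ∀ᵐ ω ∂P, ∀ i, V i ω = V' i ω := ae_all_iff.2 fun i => haeeq i
    filter_upwards [hae] with ω h
    have hXeq : ∀ t, X t ω = X' t ω := by
      intro t
      rw [hX t ω, hX'def]
      simp only
      congr 1
      exact Finset.sum_congr rfl fun i _ => h i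
    have hτeq : τ ω = τ' ω := by
      rw [hτ ω, hτ'def]
      simp only
      congr 1
      ext t
      simp only [Set.mem_setOf_eq, hXeq t]
    rw [hτeq, hXeq (τ' ω)]
  rw [hcongr]
  exact hmaster


/-- **Overshoot bound for the drift-`s` Gaussian random walk.** For all `l > 0` and
`s > 0`, `E(X_{τ_l} - l) ≤ 2s + 4`. -/
theorem gaussian_walk_overshoot_bound
    {Ω : Type*} [MeasurableSpace Ω] (P : Measure Ω) [IsProbabilityMeasure P]
    (s l : ℝ) (hs : 0 < s) (hl : 0 < l)
    (V : ℕ → Ω → ℝ)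
    (hindep : iIndepFun V P)
    (hV : ∀ i, Measure.map (V i) P = gaussianReal 0 1)
    (X : ℕ → Ω → ℝ)
    (hX : ∀ t ω, X t ω = s * t + ∑ i ∈ Finset.Icc 1 t, V i ω)
    (τ : Ω → ℕ) (hτ : ∀ ω, τ ω = sInf {t : ℕ | l ≤ X t ω}) :
    ∫⁻ ω, ENNReal.ofReal (X (τ ω) ω - l) ∂P ≤ ENNReal.ofReal (2 * s + 4) :=
  gaussian_walk_overshoot_bound' P s l hs hl V hindep hV X hX τ hτ

end OvershootAux
end
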